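/- For every tour S and every point x that S visits infinitely often, PCost_2(x,S) ≤ PCost_∞(x,S). Consequently, for every tour S that visits each point infinitely often, MCost_2(S) ≤ MCost_∞(S) for any choice of positive weights. -/

import Mathlib

open Filter Finset
open scoped ENNReal NNReal
attribute [local instance] Classical.propDecidable

/-- Total distance traveled by the tour `S` from step `t` to step `t'`. -/
noncomputable def tourDist {α : Type*} [MetricSpace α] (S : ℕ → α) (t t' : ℕ) : ℝ≥0∞ :=
  ∑ τ ∈ Finset.Ico t t', edist (S τ) (S (τ + 1))

/-- `visitTime S x k` is `v_x(k)`: `v_x(0) = 0` and, for `k ≥ 1`, the `k`-th index `t ≥ 1`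
with `S t = x`. -/
noncomputable def visitTime {α : Type*} (S : ℕ → α) (x : α) : ℕ → ℕ
  | 0 => 0
  | k + 1 => Nat.nth (fun t => 1 ≤ t ∧ S t = x) k

/-- The maximum absence length from `x` under `S`, `∞` if `x` is visited only finitely often. -/
noncomputable def PCostInf {α : Type*} [MetricSpace α] (S : ℕ → α) (x : α) : ℝ≥0∞ :=
  if {t | 1 ≤ t ∧ S t = x}.Infinite then
    ⨆ k, tourDist S (visitTime S x k) (visitTime S x (k + 1))
  else ⊤

/-- The quadratic cost of point `x` under tour `S`. -/
noncomputable def PCost2 {α : Type*} [MetricSpace α] (S : ℕ → α) (x : α) : ℝ≥0∞ :=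
  Filter.limsup (fun k =>
    (∑ k' ∈ Finset.range (k + 1),
      (tourDist S (visitTime S x k') (visitTime S x (k' + 1))) ^ 2) /
    tourDist S 0 (visitTime S x (k + 1))) Filter.atTop

noncomputable def MCostInf {α : Type*} [MetricSpace α] [Fintype α] (w : α → ℝ) (S : ℕ → α) :
    ℝ≥0∞ :=
  ⨆ x : α, ENNReal.ofReal (w x) * PCostInf S x

noncomputable def MCost2 {α : Type*} [MetricSpace α] [Fintype α] (w : α → ℝ) (S : ℕ → α) :
    ℝ≥0∞ :=
  ⨆ x : α, ENNReal.ofReal (w x) * PCost2 S x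

/-- A tour is periodic if it repeats with some period `m ≥ 1`. -/
def IsPeriodic {α : Type*} (S : ℕ → α) : Prop :=
  ∃ m : ℕ, 1 ≤ m ∧ ∀ t, S (t + m) = S t

/-- The optimum TSP value: the least total length of a Hamiltonian cycle on the `n` points. -/
noncomputable def OPTTSP (α : Type*) [MetricSpace α] (n : ℕ) [NeZero n] : ℝ≥0∞ :=
  ⨅ σ : ZMod n ≃ α, ∑ i : ZMod n, edist (σ i) (σ (i + 1))

lemma visitTime_mono {α : Type*} (S : ℕ → α) (x : α)
    (hx : {t | 1 ≤ t ∧ S t = x}.Infinite) : ∀ k, visitTime S x k ≤ visitTime S x (k + 1) := by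
  intro k
  cases k with
  | zero => exact Nat.zero_le _
  | succ k =>
    exact le_of_lt ((Nat.nth_lt_nth hx).2 (Nat.lt_succ_self k))

lemma tourDist_add {α : Type*} [MetricSpace α] (S : ℕ → α) {a b c : ℕ} (hab : a ≤ b)
    (hbc : b ≤ c) : tourDist S a b + tourDist S b c = tourDist S a c := by
  unfold tourDist
  exact Finset.sum_Ico_consecutive _ hab hbc

lemma tourDist_split {α : Type*} [MetricSpace α] (S : ℕ → α) (x : α)
    (hx : {t | 1 ≤ t ∧ S t = x}.Infinite) (k : ℕ) :
    tourDist S 0 (visitTime S x (k + 1)) =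
      ∑ k' ∈ Finset.range (k + 1),
        tourDist S (visitTime S x k') (visitTime S x (k' + 1)) := by
  induction k with
  | zero => simp [visitTime]
  | succ k ih =>
    rw [Finset.sum_range_succ, ← ih,
      tourDist_add S (Nat.zero_le _) (visitTime_mono S x hx (k + 1))]

theorem stmt6' {α : Type*} [MetricSpace α] [Fintype α] (S : ℕ → α) :
    (∀ x : α, {t | 1 ≤ t ∧ S t = x}.Infinite → PCost2 S x ≤ PCostInf S x) ∧
    ((∀ x : α, {t | 1 ≤ t ∧ S t = x}.Infinite) →
      ∀ w : α → ℝ, (∀ x, 0 < w x) → MCost2 w S ≤ MCostInf w S) := by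
  have main : ∀ x : α, {t | 1 ≤ t ∧ S t = x}.Infinite → PCost2 S x ≤ PCostInf S x := by
    intro x hx
    rw [PCostInf, if_pos hx]
    set M : ℝ≥0∞ := ⨆ k, tourDist S (visitTime S x k) (visitTime S x (k + 1)) with hM
    apply Filter.limsup_le_of_le (by isBoundedDefault)
    apply Filter.Eventually.of_forall
    intro k
    have h1 : (∑ k' ∈ Finset.range (k + 1),
        (tourDist S (visitTime S x k') (visitTime S x (k' + 1))) ^ 2) ≤
        M * tourDist S 0 (visitTime S x (k + 1)) := by
      rw [tourDist_split S x hx, Finset.mul_sum]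
      apply Finset.sum_le_sum
      intro i _
      rw [sq]
      exact mul_le_mul_left (le_iSup (fun k => tourDist S (visitTime S x k)
        (visitTime S x (k + 1))) i) _
    calc _ ≤ M * tourDist S 0 (visitTime S x (k + 1)) /
          tourDist S 0 (visitTime S x (k + 1)) := ENNReal.div_le_div_right h1 _
      _ = M * (tourDist S 0 (visitTime S x (k + 1)) /
          tourDist S 0 (visitTime S x (k + 1))) := by rw [mul_div_assoc]
      _ ≤ M * 1 := mul_le_mul_right ENNReal.div_self_le_one _
      _ = M := mul_one M
  refine ⟨main, fun hall w _ => ?_⟩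
  exact iSup_mono fun x => mul_le_mul_right (main x (hall x)) _

/-- For every point visited infinitely often, `PCost₂(x,S) ≤ PCost_∞(x,S)`;
consequently, if `S` visits each point infinitely often, `MCost₂(S) ≤ MCost_∞(S)` for any
positive weights. -/
theorem stmt6 {α : Type*} [MetricSpace α] [Fintype α] (S : ℕ → α) :
    (∀ x : α, {t | 1 ≤ t ∧ S t = x}.Infinite → PCost2 S x ≤ PCostInf S x) ∧
    ((∀ x : α, {t | 1 ≤ t ∧ S t = x}.Infinite) →
      ∀ w : α → ℝ, (∀ x, 0 < w x) → MCost2 w S ≤ MCostInf w S) := stmt6' S
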